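/- Fix a natural number a ≥ 2 and densities d, d' ∈ (0,1) with d + d' > 1. Let A ⊆ ℕ be infinite and let 𝓛 be a set of words over Fin a with A-density d'. For each L ∈ ℕ let μ_L be the law of a random set of relators at density d and length L (the product over Fin N_L, with N_L = ⌈a^(d·L)⌉, of the uniform probability measure on Fin L → Fin a). Then the probability that at least one sampled word belongs to 𝓛 tends to 1 as L → ∞ along A; formally, Tendsto (fun L => μ_L {ω | ∃ i, List.ofFn (ω i) ∈ 𝓛}) (atTop ⊓ 𝓟 A) (nhds 1). -/

import Mathlib

open MeasureTheory ENNReal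

/-- The uniform probability measure on words of length `L` over `Fin a`
(words identified with functions `Fin L → Fin a`). -/
noncomputable def uniformWords (a L : ℕ) : Measure (Fin L → Fin a) :=
  ((Fintype.card (Fin L → Fin a) : ℝ≥0∞))⁻¹ • Measure.count

/-- The law of a random set of relators at density `d` and length `L` over `Fin a`:
`N_L = ⌈a^(d·L)⌉` independent uniformly random words of length `L`. -/
noncomputable def relatorLaw (a : ℕ) (d : ℝ) (L : ℕ) :
    Measure (Fin ⌈(a : ℝ) ^ (d * (L : ℝ))⌉₊ → (Fin L → Fin a)) :=
  Measure.pi fun _ => uniformWords a L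

/-- The number of words of length `L` in the language `𝓛`. -/
noncomputable def langCount {a : ℕ} (𝓛 : Set (List (Fin a))) (L : ℕ) : ℕ :=
  open Classical in
  (Finset.univ.filter fun f : Fin L → Fin a => List.ofFn f ∈ 𝓛).card

/-- A language `𝓛` over `Fin a` has `A`-density `d` if for some `c > 0`,
`𝓛` contains at least `c·a^(d·L)` words of length `L` for each `L ∈ A`. -/
def HasADensity (a : ℕ) (A : Set ℕ) (d : ℝ) (𝓛 : Set (List (Fin a))) : Prop :=
  ∃ c : ℝ, 0 < c ∧ ∀ L ∈ A,
    c * (a : ℝ) ^ (d * (L : ℝ)) ≤ (langCount 𝓛 L : ℝ)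

-- helpers
lemma uniformWords_isProb (a L : ℕ) (ha : a ≠ 0) : IsProbabilityMeasure (uniformWords a L) := by
  constructor
  rw [uniformWords, Measure.smul_apply, smul_eq_mul, Measure.count_univ]
  rw [ENat.card_eq_coe_fintype_card, ENat.toENNReal_coe]
  refine ENNReal.inv_mul_cancel ?_ ?_
  simp [Fintype.card_fun, ha]
  simp

lemma uniformWords_apply_eq (a L : ℕ) (𝓛 : Set (List (Fin a))) :
    uniformWords a L {f : Fin L → Fin a | List.ofFn f ∈ 𝓛}
      = ((Fintype.card (Fin L → Fin a) : ℝ≥0∞))⁻¹ * (langCount 𝓛 L : ℝ≥0∞) := by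
  classical
  rw [uniformWords, Measure.smul_apply, smul_eq_mul]
  congr 1
  rw [Measure.count_apply_finite _ (Set.toFinite _)]
  congr 1
  rw [langCount]
  congr 1
  ext f
  simp

/-- if `d + d' > 1`, `A ⊆ ℕ` is infinite and `𝓛` has `A`-density `d'`,
then the probability that a random set of relators at density `d` and length `L`
meets `𝓛` tends to `1` as `L → ∞` along `A`. -/
theorem stmt0 (a : ℕ) (ha : 2 ≤ a) (d d' : ℝ)
    (hd : d ∈ Set.Ioo (0 : ℝ) 1) (hd' : d' ∈ Set.Ioo (0 : ℝ) 1) (hdd : 1 < d + d')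
    (A : Set ℕ) (hA : A.Infinite) (𝓛 : Set (List (Fin a)))
    (hdens : HasADensity a A d' 𝓛) :
    Filter.Tendsto
      (fun L : ℕ => relatorLaw a d L {ω | ∃ i, List.ofFn (ω i) ∈ 𝓛})
      (Filter.atTop ⊓ Filter.principal A) (nhds 1) := by
    classical
  obtain ⟨c, hc, hcL⟩ := hdens
  have ha0 : (0:ℝ) < a := by positivity
  have ha1n : 1 < a := by omega
  have ha1 : (1:ℝ) < a := by exact_mod_cast ha1n
  set l := Filter.atTop ⊓ Filter.principal A with hl
  -- the exponential bound function
  set g : ℕ → ℝ := fun L => Real.exp (-(c * (a:ℝ) ^ ((d + d' - 1) * (L:ℝ)))) with hg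
  have han0 : a ≠ 0 := by omega
  haveI hPu : ∀ L : ℕ, IsProbabilityMeasure (uniformWords a L) := fun L => uniformWords_isProb a L han0
  haveI hPr : ∀ L : ℕ, IsProbabilityMeasure (relatorLaw a d L) := fun L => by
    rw [relatorLaw]; infer_instance
  have hgto : Filter.Tendsto g Filter.atTop (nhds 0) := by
    have h1 : Filter.Tendsto (fun L : ℕ => ((a:ℝ) ^ (d + d' - 1)) ^ L) Filter.atTop Filter.atTop :=
      tendsto_pow_atTop_atTop_of_one_lt
        ((Real.one_lt_rpow_iff_of_pos ha0).mpr (Or.inl ⟨ha1, by linarith⟩))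
    have h2 : Filter.Tendsto (fun L : ℕ => -(c * (a:ℝ) ^ ((d + d' - 1) * (L:ℝ))))
        Filter.atTop Filter.atBot := by
      have heq : ∀ L : ℕ, (a:ℝ) ^ ((d + d' - 1) * (L:ℝ)) = ((a:ℝ) ^ (d + d' - 1)) ^ L := by
        intro L
        rw [← Real.rpow_natCast ((a:ℝ) ^ (d + d' - 1)) L, ← Real.rpow_mul ha0.le]
      simp_rw [heq]
      exact Filter.tendsto_neg_atTop_atBot.comp (h1.const_mul_atTop hc)
    exact Real.tendsto_exp_atBot.comp h2
  -- eventual smallness of t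
  have hts : Filter.Tendsto (fun L : ℕ => c * (a:ℝ) ^ ((d' - 1) * (L:ℝ))) Filter.atTop (nhds 0) := by
    have hr1 : (a:ℝ) ^ (d' - 1) < 1 :=
      Real.rpow_lt_one_of_one_lt_of_neg ha1 (by linarith [hd'.2])
    have hr0 : (0:ℝ) ≤ (a:ℝ) ^ (d' - 1) := Real.rpow_nonneg ha0.le _
    have h1 : Filter.Tendsto (fun L : ℕ => ((a:ℝ) ^ (d' - 1)) ^ L) Filter.atTop (nhds 0) :=
      tendsto_pow_atTop_nhds_zero_of_lt_one hr0 hr1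
    have heq : ∀ L : ℕ, (a:ℝ) ^ ((d' - 1) * (L:ℝ)) = ((a:ℝ) ^ (d' - 1)) ^ L := by
      intro L
      rw [← Real.rpow_natCast ((a:ℝ) ^ (d' - 1)) L, ← Real.rpow_mul ha0.le]
    simp_rw [heq]
    simpa using h1.const_mul c
  have hev1 : ∀ᶠ L : ℕ in Filter.atTop, c * (a:ℝ) ^ ((d' - 1) * (L:ℝ)) ≤ 1 :=
    hts.eventually (eventually_le_nhds one_pos)
  -- key eventual lower bound
  have key : ∀ᶠ L in l, (1:ℝ≥0∞) - ENNReal.ofReal (g L)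
      ≤ relatorLaw a d L {ω | ∃ i, List.ofFn (ω i) ∈ 𝓛} := by
    filter_upwards [hev1.filter_mono inf_le_left,
      (Filter.eventually_principal.mpr (fun L h => h) :
        ∀ᶠ L : ℕ in Filter.principal A, L ∈ A).filter_mono inf_le_right] with L ht1 hLA
    set t : ℝ := c * (a:ℝ) ^ ((d' - 1) * (L:ℝ)) with htdef
    have ht0 : 0 ≤ t := by positivity
    set N : ℕ := ⌈(a : ℝ) ^ (d * (L : ℝ))⌉₊ with hN
    set S : Set (Fin L → Fin a) := {f | List.ofFn f ∈ 𝓛} with hS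
    have hSm : MeasurableSet S := (Set.to_countable S).measurableSet
    have hcard : (Fintype.card (Fin L → Fin a)) = a ^ L := by simp [Fintype.card_fun]
    have haL : (0:ℝ) < (a:ℝ) ^ L := by positivity
    -- lower bound on p
    have hp : ENNReal.ofReal t ≤ uniformWords a L S := by
      rw [hS, uniformWords_apply_eq]
      have hle : t ≤ (langCount 𝓛 L : ℝ) / (a:ℝ) ^ L := by
        rw [le_div_iff₀ haL]
        calc t * (a:ℝ) ^ L = c * (a:ℝ) ^ (d' * (L:ℝ)) := by
              rw [htdef, ← Real.rpow_natCast (a:ℝ) L, mul_assoc, ← Real.rpow_add ha0]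
              ring_nf
          _ ≤ (langCount 𝓛 L : ℝ) := hcL L hLA
      calc ENNReal.ofReal t ≤ ENNReal.ofReal ((langCount 𝓛 L : ℝ) / (a:ℝ) ^ L) :=
            ENNReal.ofReal_le_ofReal hle
        _ = (Fintype.card (Fin L → Fin a) : ℝ≥0∞)⁻¹ * (langCount 𝓛 L : ℝ≥0∞) := by
            rw [ENNReal.ofReal_div_of_pos haL, div_eq_mul_inv, mul_comm]
            congr 1
            · rw [hcard]; push_cast; rw [ENNReal.ofReal_pow ha0.le, ENNReal.ofReal_natCast]
            · exact ENNReal.ofReal_natCast _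
    -- upper bound on q
    have hq : uniformWords a L Sᶜ ≤ ENNReal.ofReal (1 - t) := by
      rw [prob_compl_eq_one_sub hSm]
      calc (1:ℝ≥0∞) - uniformWords a L S ≤ 1 - ENNReal.ofReal t := tsub_le_tsub_left hp 1
        _ = ENNReal.ofReal (1 - t) := by
            rw [ENNReal.ofReal_sub 1 ht0, ENNReal.ofReal_one]
    -- the complement event
    have hcompl : (relatorLaw a d L) {ω | ∀ i, List.ofFn (ω i) ∉ 𝓛}
        = (uniformWords a L Sᶜ) ^ N := by
      have hset : {ω : Fin N → (Fin L → Fin a) | ∀ i, List.ofFn (ω i) ∉ 𝓛}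
          = Set.pi Set.univ (fun _ => Sᶜ) := by
        ext ω; simp [Set.mem_pi, hS]
      rw [relatorLaw, hset, Measure.pi_pi]
      simp
      rfl
    have hE : relatorLaw a d L {ω | ∃ i, List.ofFn (ω i) ∈ 𝓛}
        = 1 - (uniformWords a L Sᶜ) ^ N := by
      have hmc : MeasurableSet {ω : Fin N → (Fin L → Fin a) | ∀ i, List.ofFn (ω i) ∉ 𝓛} :=
        (Set.to_countable _).measurableSet
      have h2 := prob_compl_eq_one_sub (μ := relatorLaw a d L) hmc
      have hcc : {ω : Fin N → (Fin L → Fin a) | ∀ i, List.ofFn (ω i) ∉ 𝓛}ᶜ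
          = {ω | ∃ i, List.ofFn (ω i) ∈ 𝓛} := by
        ext ω; simp
      rw [hcc] at h2
      rw [h2, hcompl]
    rw [hE]
    refine tsub_le_tsub_left ?_ 1
    -- q^N ≤ ofReal (g L)
    calc (uniformWords a L Sᶜ) ^ N ≤ (ENNReal.ofReal (1 - t)) ^ N := pow_le_pow_left₀ (zero_le) hq N
      _ = ENNReal.ofReal ((1 - t) ^ N) := (ENNReal.ofReal_pow (by linarith) N).symm
      _ ≤ ENNReal.ofReal (g L) := by
          apply ENNReal.ofReal_le_ofReal
          calc (1 - t) ^ N ≤ (Real.exp (-t)) ^ N := by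
                apply pow_le_pow_left₀ (by linarith)
                linarith [Real.add_one_le_exp (-t)]
            _ = Real.exp (-(t * N)) := by
                rw [← Real.exp_nat_mul]; ring_nf
            _ ≤ g L := by
                rw [hg]
                apply Real.exp_le_exp.mpr
                simp only [neg_le_neg_iff]
                calc c * (a:ℝ) ^ ((d + d' - 1) * (L:ℝ))
                    = t * (a:ℝ) ^ (d * (L:ℝ)) := by
                      rw [htdef, mul_assoc, ← Real.rpow_add ha0]
                      ring_nf
                  _ ≤ t * N := by
                      apply mul_le_mul_of_nonneg_left (Nat.le_ceil _) ht0
  -- conclude by squeezing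
  have hlo : Filter.Tendsto (fun L : ℕ => (1:ℝ≥0∞) - ENNReal.ofReal (g L)) l (nhds 1) := by
    have h0 : Filter.Tendsto (fun L : ℕ => ENNReal.ofReal (g L)) l (nhds 0) := by
      have := (ENNReal.continuous_ofReal.tendsto 0).comp (hgto.mono_left (inf_le_left : l ≤ Filter.atTop))
      rw [ENNReal.ofReal_zero] at this; exact this
    have := ENNReal.Tendsto.sub
      (tendsto_const_nhds : Filter.Tendsto (fun _ : ℕ => (1:ℝ≥0∞)) l (nhds 1)) h0
      (Or.inl ENNReal.one_ne_top)
    simpa using this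
  refine tendsto_of_tendsto_of_tendsto_of_le_of_le' hlo tendsto_const_nhds key ?_
  exact Filter.Eventually.of_forall fun L => prob_le_one
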